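/- Let n ≥ 1, and for each i ∈ {1,…,n} let p_i ∈ (0,1) and y_i ∈ {0,1}. Let Δ > 0 and define the biased probabilities p̃_i = Δ·p_i/(Δ·p_i + 1 − p_i). If q̂ > 0 satisfies the stationarity equation ∑_{i=1}^n y_i = ∑_{i=1}^n q̂·p_i/(1 − p_i + q̂·p_i), then q̃ = q̂/Δ satisfies the corresponding stationarity equation for the biased probabilities: ∑_{i=1}^n y_i = ∑_{i=1}^n q̃·p̃_i/(1 − p̃_i + q̃·p̃_i). -/

import Mathlib

open Finset

/-- If `q̂ > 0` satisfies the stationarity equation for the true probabilities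
`pᵢ`, then `q̃ = q̂/Δ` satisfies the stationarity equation for the biased
probabilities `p̃ᵢ = Δ·pᵢ/(Δ·pᵢ + 1 − pᵢ)`. -/
theorem stmt_1 (n : ℕ) (hn : 1 ≤ n) (p y : Fin n → ℝ)
    (hp : ∀ i, p i ∈ Set.Ioo (0 : ℝ) 1) (hy : ∀ i, y i = 0 ∨ y i = 1)
    (Δ : ℝ) (hΔ : 0 < Δ)
    (ptilde : Fin n → ℝ)
    (hpt : ∀ i, ptilde i = Δ * p i / (Δ * p i + 1 - p i))
    (qhat : ℝ) (hqhat : 0 < qhat)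
    (hstat : ∑ i, y i = ∑ i, qhat * p i / (1 - p i + qhat * p i))
    (qtilde : ℝ) (hqt : qtilde = qhat / Δ) :
    ∑ i, y i = ∑ i, qtilde * ptilde i / (1 - ptilde i + qtilde * ptilde i) := by
  rw [hstat]
  refine Finset.sum_congr rfl fun i _ => ?_
  obtain ⟨hp0, hp1⟩ := hp i
  have hD : 0 < Δ * p i + 1 - p i := by nlinarith
  have hE : 0 < 1 - p i + qhat * p i := by nlinarith
  rw [hpt i, hqt]
  have key : 1 - Δ * p i / (Δ * p i + 1 - p i) + qhat / Δ * (Δ * p i / (Δ * p i + 1 - p i))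
      = (1 - p i + qhat * p i) / (Δ * p i + 1 - p i) := by
    field_simp
    ring
  rw [key, div_div_eq_mul_div, div_eq_div_iff hE.ne' (by positivity)]
  field_simp
  exact (div_self (by nlinarith)).symm
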